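/- Let λ > 0, ν(x) = (λ²/2)∇log π(x) for a differentiable positive density π on ℝᵈ with ess sup ‖∇log π‖ = ∞. Then for every ε > 0 and every r > 0 there exists a set A of positive π-measure such that for all x ∈ A, P(‖x + ν(x) + λZ − x‖ > r) > 1 − ε, where Z is standard d-dimensional Gaussian; hence the MALA proposal is not local. -/

import Mathlib

open MeasureTheory ProbabilityTheory

theorem stmt_17 {d : ℕ} {Ω : Type*} [MeasurableSpace Ω] (P : Measure Ω)
    [IsProbabilityMeasure P]
    (Z : Ω → EuclideanSpace ℝ (Fin d)) (hZmeas : Measurable Z)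
    -- Z has i.i.d. standard normal components
    (hZlaw : ∀ i : Fin d, Measure.map (fun ω => Z ω i) P = gaussianReal 0 1)
    (hZindep : iIndepFun (fun i ω => Z ω i) P)
    (lam : ℝ) (hlam : 0 < lam)
    (π : EuclideanSpace ℝ (Fin d) → ℝ) (hπpos : ∀ x, 0 < π x)
    (hπdiff : Differentiable ℝ (fun x => Real.log (π x)))
    (πm : Measure (EuclideanSpace ℝ (Fin d))) [IsProbabilityMeasure πm]
    (hπm : πm = volume.withDensity (fun x => ENNReal.ofReal (π x)))
    -- ess sup of the gradient of log π is infinite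
    (hess : essSup (fun x => ENNReal.ofReal ‖gradient (fun x => Real.log (π x)) x‖) πm = ⊤)
    (ν : EuclideanSpace ℝ (Fin d) → EuclideanSpace ℝ (Fin d))
    (hν : ∀ x, ν x = (lam ^ 2 / 2) • gradient (fun x => Real.log (π x)) x) :
    ∀ ε > (0:ℝ), ∀ r > (0:ℝ), ∃ A : Set (EuclideanSpace ℝ (Fin d)),
      MeasurableSet A ∧ 0 < πm A ∧
      ∀ x ∈ A, 1 - ε < (P {ω | r < ‖(x + ν x + lam • Z ω) - x‖}).toReal := by
  intro ε hε r hr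
  set g : EuclideanSpace ℝ (Fin d) → EuclideanSpace ℝ (Fin d) :=
    gradient (fun x => Real.log (π x)) with hg
  have hgmeas : Measurable g := by
    have h1 : Measurable (fderiv ℝ (fun x => Real.log (π x))) := measurable_fderiv ℝ _
    exact ((InnerProductSpace.toDual ℝ
      (EuclideanSpace ℝ (Fin d))).symm.continuous.measurable).comp h1
  -- tail sets of ‖Z‖
  set S : ℕ → Set Ω := fun n => {ω | (n : ℝ) ≤ ‖Z ω‖} with hS
  have hSmeas : ∀ n, MeasurableSet (S n) := fun n =>
    measurableSet_le measurable_const hZmeas.norm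
  have hSanti : Antitone S := by
    intro m n hmn ω hω
    simp only [hS, Set.mem_setOf_eq] at hω ⊢
    exact le_trans (by exact_mod_cast hmn) hω
  have hSinter : ⋂ n, S n = ∅ := by
    ext ω
    simp only [Set.mem_iInter, Set.mem_empty_iff_false, iff_false, not_forall]
    obtain ⟨n, hn⟩ := exists_nat_gt ‖Z ω‖
    exact ⟨n, by simp [hS, not_le.mpr hn]⟩
  have htend : Filter.Tendsto (fun n => P (S n)) Filter.atTop (nhds 0) := by
    have := tendsto_measure_iInter_atTop (μ := P)
      (fun n => (hSmeas n).nullMeasurableSet) hSanti ⟨0, measure_ne_top P _⟩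
    rw [hSinter] at this
    simp at this
    exact this
  obtain ⟨n, hn⟩ : ∃ n, P (S n) < ENNReal.ofReal ε := by
    have h0 : (0:ENNReal) < ENNReal.ofReal ε := by simpa using hε
    exact (htend.eventually_lt_const h0).exists
  -- the set A
  set C : ℝ := 2 * (r + lam * n) / lam ^ 2 with hC
  refine ⟨{x | C < ‖g x‖}, measurableSet_lt measurable_const hgmeas.norm, ?_, ?_⟩
  · -- positive measure
    by_contra h
    push_neg at h
    have h0 : πm {x | C < ‖g x‖} = 0 := le_antisymm h bot_le
    have hae : (fun x => ENNReal.ofReal ‖g x‖) ≤ᵐ[πm] fun _ => ENNReal.ofReal C := by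
      rw [Filter.EventuallyLE, ae_iff]
      refine measure_mono_null ?_ h0
      intro x hx
      simp only [Set.mem_setOf_eq, not_le] at hx ⊢
      by_contra hcon
      exact absurd (ENNReal.ofReal_le_ofReal (not_lt.mp hcon)) (not_le.mpr hx)
    have := essSup_le_of_ae_le (μ := πm) (ENNReal.ofReal C) hae
    rw [hess] at this
    exact absurd this (by simp)
  · intro x hx
    -- hx : C < ‖g x‖
    have hnorm : r + lam * n < ‖ν x‖ := by
      rw [hν, norm_smul]
      have hxx : C < ‖g x‖ := hx
      have : 2 * (r + lam * n) / lam ^ 2 < ‖g x‖ := hxx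
      have hlam2 : (0:ℝ) < lam ^ 2 := by positivity
      rw [div_lt_iff₀ hlam2] at this
      rw [Real.norm_eq_abs, abs_of_pos (by positivity : (0:ℝ) < lam ^ 2 / 2)]
      nlinarith [norm_nonneg (g x)]
    -- event inclusion
    have hsub : (S n)ᶜ ⊆ {ω | r < ‖(x + ν x + lam • Z ω) - x‖} := by
      intro ω hω
      simp only [Set.mem_compl_iff, hS, Set.mem_setOf_eq, not_le] at hω
      have heq : (x + ν x + lam • Z ω) - x = ν x + lam • Z ω := by abel
      rw [Set.mem_setOf_eq, heq]
      have h1 : ‖ν x‖ - ‖lam • Z ω‖ ≤ ‖ν x + lam • Z ω‖ := by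
        have := norm_sub_le (ν x + lam • Z ω) (lam • Z ω)
        simpa using this
      have h2 : ‖lam • Z ω‖ = lam * ‖Z ω‖ := by
        rw [norm_smul, Real.norm_eq_abs, abs_of_pos hlam]
      nlinarith
    have hmono := measure_mono (μ := P) hsub
    have hcompl : P ((S n)ᶜ) = 1 - P (S n) := by
      rw [measure_compl (hSmeas n) (measure_ne_top P _), measure_univ]
    have hfin : P {ω | r < ‖(x + ν x + lam • Z ω) - x‖} ≠ ⊤ := measure_ne_top P _
    have hSr : (P (S n)).toReal < ε := by
      have hle : P (S n) ≠ ⊤ := measure_ne_top P _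
      rw [← ENNReal.ofReal_toReal hle] at hn
      exact (ENNReal.ofReal_lt_ofReal_iff hε).mp hn
    have h3 : (P ((S n)ᶜ)).toReal ≤ (P {ω | r < ‖(x + ν x + lam • Z ω) - x‖}).toReal :=
      ENNReal.toReal_mono hfin hmono
    have h4 : (P ((S n)ᶜ)).toReal = 1 - (P (S n)).toReal := by
      rw [hcompl, ENNReal.toReal_sub_of_le (prob_le_one) (by simp)]
      simp
    linarith
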